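/- Suppose the legal language is prefix-closed, K = pr(K), there is no starting error in L(G, γ^N_cons) (i.e. f^N_cons(ε) ≠ ∅), and N_u(L(G)) exists. If N ≥ N_u(L(G)) + 2, then the conservative LLP supervisor is valid: L(G, γ^N_cons) = pr(K↑). -/

import Mathlib

open Set

/-- Prefix closure of a language. -/
def prCl {α : Type*} (L : Set (List α)) : Set (List α) := {s | ∃ t ∈ L, s <+: t}

/-- `M` is controllable w.r.t. the (prefix-closed) language `L` and uncontrollable
events `Suc`: `pr(M)·Σ_uc ∩ L ⊆ pr(M)`. -/
def ctrb {α : Type*} (M L : Set (List α)) (Suc : Set α) : Prop :=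
  ∀ s ∈ prCl M, ∀ σ ∈ Suc, s ++ [σ] ∈ L → s ++ [σ] ∈ prCl M

/-- Supremal controllable sublanguage of `K` w.r.t. `L` and `Suc`:
the union of all controllable sublanguages of `K`. -/
def supC {α : Type*} (K L : Set (List α)) (Suc : Set α) : Set (List α) :=
  ⋃₀ {M | M ⊆ K ∧ ctrb M L Suc}

/-- Post-language of `L` after `s`: `L/s = {t : st ∈ L}`. -/
def postL {α : Type*} (L : Set (List α)) (s : List α) : Set (List α) := {t | s ++ t ∈ L}

/-- Truncation of `L` to strings of length at most `N`. -/
def truncL {α : Type*} (L : Set (List α)) (N : ℕ) : Set (List α) := {t ∈ L | t.length ≤ N}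

/-- Active set of `L` after `s`. -/
def activeSet {α : Type*} (L : Set (List α)) (s : List α) : Set α := {σ | s ++ [σ] ∈ L}

/-- The closed-loop language `L(G,γ)`, defined inductively:
`ε ∈ L(G,γ)`, and `sσ ∈ L(G,γ)` iff `s ∈ L(G,γ)`, `sσ ∈ L(G)` and `σ ∈ γ(s)`. -/
inductive InLoop {α : Type*} (L : Set (List α)) (γ : List α → Set α) : List α → Prop
  | nil : InLoop L γ []
  | snoc {s : List α} {σ : α} : InLoop L γ s → (s ++ [σ]) ∈ L → σ ∈ γ s →
      InLoop L γ (s ++ [σ])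

/-- The closed-loop language as a set. -/
def loopLang {α : Type*} (L : Set (List α)) (γ : List α → Set α) : Set (List α) :=
  {s | InLoop L γ s}

/-- The `N`-step conservative LLP decision
`f^N_cons(s) = (K/s|_{N-1})^{↑/s|_N}`. -/
def fCons {α : Type*} (K L : Set (List α)) (Suc : Set α) (N : ℕ) (s : List α) :
    Set (List α) :=
  supC (truncL (postL K s) (N - 1)) (truncL (postL L s) N) Suc

/-- The `N`-step optimistic LLP decision
`f^N_optm(s) = (K/s|_N ∪ (pr(K)/s|_N \ pr(K)/s|_{N-1}))^{↑/s|_N}`. -/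
def fOptm {α : Type*} (K L : Set (List α)) (Suc : Set α) (N : ℕ) (s : List α) :
    Set (List α) :=
  supC (truncL (postL K s) N ∪
        (truncL (postL (prCl K) s) N \ truncL (postL (prCl K) s) (N - 1)))
       (truncL (postL L s) N) Suc

/-- The LLP control policy `γ(s) = pr(f(s))|_1 ∪ (Σ_uc ∩ Σ_{L(G)}(s))`,
viewed as the set of enabled events. -/
def policy {α : Type*} (f : List α → Set (List α)) (L : Set (List α)) (Suc : Set α)
    (s : List α) : Set α :=
  {σ | [σ] ∈ prCl (f s)} ∪ (Suc ∩ activeSet L s)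

/-- The conservative LLP control policy `γ^N_cons`. -/
def γCons {α : Type*} (K L : Set (List α)) (Suc : Set α) (N : ℕ) : List α → Set α :=
  policy (fCons K L Suc N) L Suc

/-- The optimistic LLP control policy `γ^N_optm`. -/
def γOptm {α : Type*} (K L : Set (List α)) (Suc : Set α) (N : ℕ) : List α → Set α :=
  policy (fOptm K L Suc N) L Suc

/-- The set of lengths of subtraces of uncontrollable events occurring in `L`;
`N_u(L)` is its greatest element, when it exists. -/
def uncLens {α : Type*} (Suc : Set α) (L : Set (List α)) : Set ℕ :=
  {n | ∃ t : List α, t.length = n ∧ (∀ σ ∈ t, σ ∈ Suc) ∧ ∃ u v : List α, u ++ t ++ v ∈ L}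


section LLPAux
variable {α : Type*}

/-- Prefix-closedness of a language. -/
def PfxCl (L : Set (List α)) : Prop := ∀ ⦃s t : List α⦄, s <+: t → t ∈ L → s ∈ L

lemma pfxCl_prCl (L : Set (List α)) : PfxCl (prCl L) := by
  rintro s t hst ⟨u, hu, htu⟩
  exact ⟨u, hu, hst.trans htu⟩

lemma prCl_eq_self {L : Set (List α)} (h : PfxCl L) : prCl L = L := by
  apply Set.Subset.antisymm
  · rintro s ⟨t, ht, hst⟩; exact h hst ht
  · intro s hs; exact ⟨s, hs, List.prefix_refl s⟩

lemma prCl_mono {L M : Set (List α)} (h : L ⊆ M) : prCl L ⊆ prCl M := by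
  rintro s ⟨t, ht, hst⟩; exact ⟨t, h ht, hst⟩

lemma pfxCl_trunc_post {L : Set (List α)} (h : PfxCl L) (s : List α) (m : ℕ) :
    PfxCl (truncL (postL L s) m) := by
  rintro p t hpt ⟨htL, htlen⟩
  refine ⟨h ?_ htL, le_trans hpt.length_le htlen⟩
  obtain ⟨c, hc⟩ := hpt
  exact ⟨c, by rw [← hc, List.append_assoc]⟩

/-- The explicit characterization set for the supremal controllable sublanguage. -/
def Dset (K' L' : Set (List α)) (Suc : Set α) : Set (List α) :=
  {t | t ∈ K' ∧ ∀ p, p <+: t → ∀ w : List α, (∀ σ ∈ w, σ ∈ Suc) → p ++ w ∈ L' → p ++ w ∈ K'}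

lemma prefix_singleton {p : List α} {σ : α} (h : p <+: [σ]) : p = [] ∨ p = [σ] := by
  rcases (List.prefix_concat_iff (l₂ := ([] : List α)) (a := σ) (l₁ := p)).mp
      (by simpa using h) with h1 | h1
  · right; simpa using h1
  · left; exact List.prefix_nil.mp h1

lemma pfxCl_Dset {K' L' : Set (List α)} {Suc : Set α} (hK : PfxCl K') :
    PfxCl (Dset K' L' Suc) := by
  rintro s t hst ⟨htK, hcond⟩
  exact ⟨hK hst htK, fun p hp w hw hwl => hcond p (hp.trans hst) w hw hwl⟩

lemma Dset_mem_of_snoc {K' L' : Set (List α)} {Suc : Set α} {s : List α} {σ : α}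
    (hs : s ∈ Dset K' L' Suc) (hσ : σ ∈ Suc) (hL : s ++ [σ] ∈ L') :
    s ++ [σ] ∈ Dset K' L' Suc := by
  obtain ⟨hsK, hcond⟩ := hs
  refine ⟨hcond s (List.prefix_refl s) [σ] (by simpa using hσ) hL, ?_⟩
  intro p hp w hw hwl
  rcases List.prefix_concat_iff.mp hp with hp | hp
  · subst hp
    have h1 : s ++ (σ :: w) ∈ K' := by
      refine hcond s (List.prefix_refl s) (σ :: w) ?_ ?_
      · intro τ hτ; rcases List.mem_cons.mp hτ with h | h
        · subst h; exact hσ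
        · exact hw τ h
      · simpa [List.append_assoc] using hwl
    simpa [List.append_assoc] using h1
  · exact hcond p hp w hw hwl

lemma ctrb_Dset {K' L' : Set (List α)} {Suc : Set α} (hK : PfxCl K') :
    ctrb (Dset K' L' Suc) L' Suc := by
  intro s hs σ hσ hL
  rw [prCl_eq_self (pfxCl_Dset hK)] at hs ⊢
  exact Dset_mem_of_snoc hs hσ hL

lemma ctrb_chain {M L' : Set (List α)} {Suc : Set α} (hL : PfxCl L') (hM : ctrb M L' Suc) :
    ∀ w : List α, (∀ σ ∈ w, σ ∈ Suc) → ∀ p ∈ prCl M, p ++ w ∈ L' → p ++ w ∈ prCl M := by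
  intro w
  induction w with
  | nil => intro _ p hp _; simpa using hp
  | cons σ w ih =>
    intro hw p hp hpw
    have h1 : p ++ [σ] ∈ L' := hL ⟨w, by simp⟩ hpw
    have h2 : p ++ [σ] ∈ prCl M := hM p hp σ (hw σ (by simp)) h1
    have h3 := ih (fun τ hτ => hw τ (by simp [hτ])) (p ++ [σ]) h2
      (by simpa [List.append_assoc] using hpw)
    simpa [List.append_assoc] using h3

lemma supC_eq_Dset {K' L' : Set (List α)} {Suc : Set α} (hK : PfxCl K') (hL : PfxCl L') :
    supC K' L' Suc = Dset K' L' Suc := by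
  apply Set.Subset.antisymm
  · rintro t ⟨M, ⟨hMK, hMc⟩, htM⟩
    refine ⟨hMK htM, ?_⟩
    intro p hp w hw hwl
    have hpM : p ∈ prCl M := ⟨t, htM, hp⟩
    have h1 : p ++ w ∈ prCl M := ctrb_chain hL hMc w hw p hpM hwl
    have h2 : p ++ w ∈ prCl K' := prCl_mono hMK h1
    rwa [prCl_eq_self hK] at h2
  · intro t ht
    exact ⟨Dset K' L' Suc, ⟨fun x hx => hx.1, ctrb_Dset hK⟩, ht⟩

end LLPAux

/-- Case I (`K = pr(K)`), conservative attitude, approximating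
`N_u(K)` by `N_u(L(G))`. If there is no starting error and
`N ≥ N_u(L(G)) + 2`, then `L(G, γ^N_cons) = pr(K↑)`. -/
theorem cons_valid_caseI_plant {α : Type*} [Fintype α]
    (Sc Suc : Set α) (hpart : Sc ∪ Suc = Set.univ) (hdisj : Disjoint Sc Suc)
    (LG Lm K : Set (List α)) (hLG : LG = prCl Lm)
    (hKm : K ⊆ Lm) (hKcl : K = prCl K ∩ Lm)
    (hKpr : K = prCl K)
    (N : ℕ)
    (hstart : fCons K LG Suc N ([] : List α) ≠ ∅)
    (h : ∃ n, IsGreatest (uncLens Suc LG) n ∧ n + 2 ≤ N) :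
    loopLang LG (γCons K LG Suc N) = prCl (supC K LG Suc) := by
  -- basic prefix-closedness facts
  have hKpfx : PfxCl K := by rw [hKpr]; exact pfxCl_prCl K
  have hLGpfx : PfxCl LG := by rw [hLG]; exact pfxCl_prCl Lm
  have hKLG : K ⊆ LG := fun x hx => hLG ▸ ⟨x, hKm hx, List.prefix_refl x⟩
  obtain ⟨n, hn, hnN⟩ := h
  -- length bound on uncontrollable subtraces
  have hwlen : ∀ p w : List α, (∀ σ ∈ w, σ ∈ Suc) → p ++ w ∈ LG → w.length ≤ n := by
    intro p w hw hmem
    exact hn.2 ⟨w, rfl, hw, p, [], by simpa using hmem⟩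
  -- the supremal controllable sublanguage, explicitly
  set S : Set (List α) := Dset K LG Suc with hS
  have hsupC : supC K LG Suc = S := supC_eq_Dset hKpfx hLGpfx
  have hSsubK : S ⊆ K := fun x hx => hx.1
  have hSpfx : PfxCl S := pfxCl_Dset hKpfx
  -- fCons, explicitly
  have hfCons : ∀ s : List α, fCons K LG Suc N s =
      Dset (truncL (postL K s) (N - 1)) (truncL (postL LG s) N) Suc := by
    intro s
    exact supC_eq_Dset (pfxCl_trunc_post hKpfx s (N - 1)) (pfxCl_trunc_post hLGpfx s N)
  -- enabled step: if s and s++[σ] are in S, then [σ] ∈ fCons s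
  have henable : ∀ (s : List α) (σ : α), s ∈ S → s ++ [σ] ∈ S →
      [σ] ∈ fCons K LG Suc N s := by
    intro s σ hsS hσS
    rw [hfCons]
    refine ⟨⟨hσS.1, by simp only [List.length_cons, List.length_nil]; omega⟩, ?_⟩
    intro p hp w hw hwl
    obtain ⟨hwLG, hwN⟩ := hwl
    have hwlenn : w.length ≤ n := hwlen (s ++ p) w hw (by simpa [List.append_assoc, postL] using hwLG)
    have hspS : s ++ p ∈ S := by
      rcases prefix_singleton hp with hp | hp
      · subst hp; simpa using hsS
      · subst hp; exact hσS
    have hK' : (s ++ p) ++ w ∈ K :=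
      hspS.2 (s ++ p) (List.prefix_refl _) w hw (by simpa [List.append_assoc, postL] using hwLG)
    have hplen : p.length ≤ 1 := by
      rcases prefix_singleton hp with hp | hp <;> subst hp <;> simp
    refine ⟨by simpa [List.append_assoc, postL] using hK', ?_⟩
    simp only [List.length_append] at *
    omega
  -- sound step: if s ∈ S, σ enabled and s++[σ] feasible, then s++[σ] ∈ S
  have hsound : ∀ (s : List α) (σ : α), s ∈ S → σ ∈ γCons K LG Suc N s →
      s ++ [σ] ∈ LG → s ++ [σ] ∈ S := by
    intro s σ hsS hσγ hσLG
    rcases hσγ with hσf | ⟨hσu, _⟩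
    · -- σ enabled by the lookahead decision
      obtain ⟨t, htf, hσt⟩ := hσf
      rw [hfCons] at htf
      obtain ⟨⟨htK, _⟩, hcond⟩ := htf
      have hσK : s ++ [σ] ∈ K := hKpfx (by exact ⟨t.drop 1, by
        obtain ⟨c, hc⟩ := hσt
        rw [← hc]; simp⟩) htK
      refine ⟨hσK, ?_⟩
      intro p hp w hw hwl
      rcases List.prefix_concat_iff.mp hp with hp | hp
      · subst hp
        -- use the lookahead condition at prefix [σ] of t
        have hwlenn : w.length ≤ n := hwlen (s ++ [σ]) w hw (by simpa [List.append_assoc] using hwl)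
        have h1 : [σ] ++ w ∈ truncL (postL LG s) N := by
          refine ⟨by simpa [List.append_assoc, postL] using hwl, ?_⟩
          simp only [List.length_append, List.length_cons, List.length_nil]
          omega
        have h2 := hcond [σ] hσt w hw h1
        simpa [List.append_assoc, postL] using h2.1
      · exact hsS.2 p hp w hw hwl
    · -- σ uncontrollable and feasible
      exact Dset_mem_of_snoc hsS hσu hσLG
  -- no starting error gives [] ∈ S
  have hnil : ([] : List α) ∈ S := by
    obtain ⟨t, htf⟩ := Set.nonempty_iff_ne_empty.mpr hstart
    rw [hfCons] at htf
    obtain ⟨⟨htK, _⟩, hcond⟩ := htf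
    have htK' : t ∈ K := by simpa [postL] using htK
    refine ⟨hKpfx (List.nil_prefix) htK', ?_⟩
    intro p hp w hw hwl
    have hp' : p = [] := List.prefix_nil.mp hp
    subst hp'
    have hwLG : w ∈ LG := by simpa using hwl
    have hwlenn : w.length ≤ n := hwlen [] w hw (by simpa using hwLG)
    have h1 : ([] : List α) ++ w ∈ truncL (postL LG []) N := by
      refine ⟨by simpa [postL] using hwLG, ?_⟩
      simp only [List.nil_append]
      omega
    have h2 := hcond [] (List.nil_prefix) w hw h1
    simpa [postL] using h2.1
  -- conclude
  rw [hsupC, prCl_eq_self hSpfx]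
  apply Set.Subset.antisymm
  · intro s hs
    induction hs with
    | nil => exact hnil
    | snoc hs' hLGm hγ ih => exact hsound _ _ ih hγ hLGm
  · intro s hsS
    induction s using List.reverseRecOn with
    | nil => exact InLoop.nil
    | append_singleton u σ ih =>
      have huS : u ∈ S := hSpfx ⟨[σ], rfl⟩ hsS
      have huLoop : InLoop LG (γCons K LG Suc N) u := ih huS
      have hLGm : u ++ [σ] ∈ LG := hKLG (hSsubK hsS)
      have hγ : σ ∈ γCons K LG Suc N u := by
        left
        exact ⟨[σ], henable u σ huS hsS, List.prefix_refl _⟩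
      exact InLoop.snoc huLoop hLGm hγ
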